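/- Fix integers p ≥ 2 and 0 ≤ i ≤ ⌊(p−1)/2⌋. Let a₀, a₁, …, aₙ ∈ ℂ satisfy Σ'_μ a_μ^{p−i} · ā_μ^{i} = 0, where ā_μ is the complex conjugate of a_μ. Then the linear function u(x₀,…,xₙ) := a₀x₀ + Σ_{j=1}^{n} a_j x_j is a solution of the (p,i)-submodel. -/

import Mathlib

/-- Iterated partial derivative `∂_μᵐ u (x)` of `u : ℝ^{1+n} → ℂ` in the coordinate `x_μ`. -/
noncomputable def ipd {n : ℕ} (μ : Fin (n + 1)) (m : ℕ)
    (u : (Fin (n + 1) → ℝ) → ℂ) (x : Fin (n + 1) → ℝ) : ℂ :=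
  iteratedDeriv m (fun t => u (Function.update x μ t)) (x μ)

/-- The Minkowski sum `Σ'_μ A_μ = A₀ − Σ_{j=1}^{n} A_j`. -/
noncomputable def minkSum {n : ℕ} (A : Fin (n + 1) → ℂ) : ℂ := A 0 - ∑ j : Fin n, A j.succ

/-- `u : ℝ^{1+n} → ℂ` solves the `(p,i)`-submodel:
`Σ'_μ ∂_μ^{p−i}(uᵏ)·∂_μ^{i}(ūˡ) = 0` for all `k = 1,…,p−i` and `l = 0,…,i`. -/
def SolvesSubmodel {n : ℕ} (p i : ℕ) (u : (Fin (n + 1) → ℝ) → ℂ) : Prop :=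
  ∀ k ∈ Finset.Icc 1 (p - i), ∀ l ∈ Finset.Icc 0 i, ∀ x,
    minkSum (fun μ => ipd μ (p - i) (fun y => u y ^ k) x *
      ipd μ i (fun y => (starRingEnd ℂ) (u y) ^ l) x) = 0

/-- Linear solutions: if `a₀,…,aₙ ∈ ℂ` satisfy `Σ'_μ a_μ^{p−i}·ā_μ^{i} = 0`, then
`u(x) = Σ_μ a_μ x_μ` solves the `(p,i)`-submodel. -/

lemma iter_pow (b c : ℂ) (k : ℕ) : ∀ m, iteratedDeriv m (fun t : ℝ => (b * (t:ℂ) + c) ^ k)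
    = fun t : ℝ => (k.descFactorial m : ℂ) * b ^ m * (b * (t:ℂ) + c) ^ (k - m) := by
  intro m
  induction m with
  | zero => simp
  | succ m ih =>
    rw [iteratedDeriv_succ, ih]
    funext t
    have h1 : HasDerivAt (fun z : ℂ => (b * z + c) ^ (k - m))
        ((↑(k - m) : ℂ) * (b * (t:ℂ) + c) ^ (k - m - 1) * b) (t:ℂ) := by
      simpa [Pi.pow_def] using (((hasDerivAt_id ((t:ℝ):ℂ)).const_mul b).add_const c).pow (k - m)
    have h2 := (h1.comp_ofReal).const_mul ((k.descFactorial m : ℂ) * b ^ m)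
    rw [h2.deriv]
    have he : k - m - 1 = k - (m+1) := by omega
    rw [he, Nat.descFactorial_succ]
    push_cast
    ring

lemma minkSum_const_mul {n : ℕ} (K : ℂ) (f : Fin (n + 1) → ℂ) :
    minkSum (fun μ => K * f μ) = K * minkSum f := by
  simp [minkSum, Finset.mul_sum, mul_sub]

lemma minkSum_zero {n : ℕ} : minkSum (fun _ : Fin (n + 1) => (0:ℂ)) = 0 := by
  simp [minkSum]

lemma ipd_lin_pow {n : ℕ} (b : Fin (n + 1) → ℂ) (x : Fin (n + 1) → ℝ)
    (μ : Fin (n + 1)) (e m : ℕ) :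
    ipd μ m (fun y => (∑ ν, b ν * (y ν : ℂ)) ^ e) x
      = (e.descFactorial m : ℂ) * b μ ^ m * (∑ ν, b ν * (x ν : ℂ)) ^ (e - m) := by
  set c : ℂ := ∑ ν ∈ Finset.univ \ {μ}, b ν * (x ν : ℂ) with hc
  have hu : ∀ t : ℝ, (∑ ν, b ν * ((Function.update x μ t ν : ℝ) : ℂ)) = b μ * t + c := by
    intro t
    have hfun : (fun ν => b ν * ((Function.update x μ t ν : ℝ) : ℂ))
        = Function.update (fun ν => b ν * ((x ν : ℝ) : ℂ)) μ (b μ * t) := by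
      funext ν
      rcases eq_or_ne ν μ with h | h
      · subst h; simp
      · simp [Function.update_of_ne h]
    rw [hfun, Finset.sum_update_of_mem (Finset.mem_univ μ)]
  have hx : (∑ ν, b ν * (x ν : ℂ)) = b μ * (x μ : ℂ) + c := by
    have := hu (x μ)
    rwa [Function.update_eq_self] at this
  unfold ipd
  have hfe : (fun t : ℝ => (∑ ν, b ν * ((Function.update x μ t ν : ℝ) : ℂ)) ^ e)
      = fun t : ℝ => (b μ * (t:ℂ) + c) ^ e := by
    funext t; rw [hu t]
  rw [hfe, iter_pow, hx]

private theorem submodel_linear_solution' {n : ℕ} (p i : ℕ) (hp : 2 ≤ p) (hi : i ≤ (p - 1) / 2)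
    (a : Fin (n + 1) → ℂ)
    (ha : minkSum (fun μ => a μ ^ (p - i) * (starRingEnd ℂ) (a μ) ^ i) = 0) :
    ∀ k ∈ Finset.Icc 1 (p - i), ∀ l ∈ Finset.Icc 0 i, ∀ x,
    minkSum (fun μ => ipd μ (p - i) (fun y => (∑ ν, a ν * (y ν : ℂ)) ^ k) x *
      ipd μ i (fun y => (starRingEnd ℂ) (∑ ν, a ν * (y ν : ℂ)) ^ l) x) = 0 := by
  intro k hk l hl x
  simp only [Finset.mem_Icc] at hk hl
  have hconj : (fun y : Fin (n+1) → ℝ => (starRingEnd ℂ) (∑ ν, a ν * (y ν : ℂ)) ^ l)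
      = fun y => (∑ ν, (starRingEnd ℂ) (a ν) * (y ν : ℂ)) ^ l := by
    funext y
    simp [map_sum, map_mul, Complex.conj_ofReal]
  rw [hconj]
  rcases lt_or_eq_of_le hk.2 with hlt | heq
  · have hz : (k.descFactorial (p - i) : ℂ) = 0 := by
      norm_cast
      exact Nat.descFactorial_eq_zero_iff_lt.mpr hlt
    have : (fun μ => ipd μ (p - i) (fun y => (∑ ν, a ν * (y ν : ℂ)) ^ k) x *
        ipd μ i (fun y => (∑ ν, (starRingEnd ℂ) (a ν) * (y ν : ℂ)) ^ l) x)
        = fun _ => (0:ℂ) := by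
      funext μ
      rw [ipd_lin_pow, hz]
      ring
    rw [this, minkSum_zero]
  · rcases lt_or_eq_of_le hl.2 with hllt | hleq
    · have hz : (l.descFactorial i : ℂ) = 0 := by
        norm_cast
        exact Nat.descFactorial_eq_zero_iff_lt.mpr hllt
      have : (fun μ => ipd μ (p - i) (fun y => (∑ ν, a ν * (y ν : ℂ)) ^ k) x *
          ipd μ i (fun y => (∑ ν, (starRingEnd ℂ) (a ν) * (y ν : ℂ)) ^ l) x)
          = fun _ => (0:ℂ) := by
        funext μ
        rw [ipd_lin_pow (fun ν => (starRingEnd ℂ) (a ν)), hz]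
        ring
      rw [this, minkSum_zero]
    · rw [heq, hleq]
      have : (fun μ => ipd μ (p - i) (fun y => (∑ ν, a ν * (y ν : ℂ)) ^ (p - i)) x *
          ipd μ i (fun y => (∑ ν, (starRingEnd ℂ) (a ν) * (y ν : ℂ)) ^ i) x)
          = fun μ => (((p - i).factorial * i.factorial : ℕ) : ℂ) *
            (a μ ^ (p - i) * (starRingEnd ℂ) (a μ) ^ i) := by
        funext μ
        rw [ipd_lin_pow, ipd_lin_pow (fun ν => (starRingEnd ℂ) (a ν))]
        simp only [Nat.descFactorial_self, Nat.sub_self, pow_zero]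
        push_cast
        ring
      rw [this, minkSum_const_mul, ha, mul_zero]

theorem submodel_linear_solution {n : ℕ} (p i : ℕ) (hp : 2 ≤ p) (hi : i ≤ (p - 1) / 2)
    (a : Fin (n + 1) → ℂ)
    (ha : minkSum (fun μ => a μ ^ (p - i) * (starRingEnd ℂ) (a μ) ^ i) = 0) :
    SolvesSubmodel p i (fun x => ∑ μ, a μ * (x μ : ℂ)) :=
  submodel_linear_solution' p i hp hi a ha
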